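/- Let k ≥ 2 and n ≥ 2 be integers such that k − 1 divides n − 1. Let T = 1 + n + n² + ⋯ + n^{k−2} and let W = {1, n, n², …, n^{k−2}} ∪ {−((n−1)/(k−1))·T}, a set of k integers. Then every (n,W)-universal graph U satisfies, as real numbers, |U| ≥ ((n−1)/(k−1)²)^{(k−1)²/k}; equivalently |U|^k ≥ ((n−1)/(k−1)²)^{(k−1)²}. -/

import Mathlib

open Filter


/-- A finite path: a list of consecutive edges, all belonging to `E`,
starting at `u` (when nonempty). -/
def FinPath {V : Type} (E : Set (V × ℤ × V)) (u : V) (p : List (V × ℤ × V)) : Prop :=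
  (∀ e ∈ p, e ∈ E) ∧ List.Chain' (fun e e' => e.2.2 = e'.1) p ∧
    ∀ h : p ≠ [], (p.head h).1 = u

/-- The last vertex of a finite path starting at `u` (which is `u` itself for the empty path). -/
def lastV {V : Type} (u : V) (p : List (V × ℤ × V)) : V :=
  (p.getLastD (u, 0, u)).2.2

/-- An infinite path: a sequence of consecutive edges, all belonging to `E`. -/
def InfPath {V : Type} (E : Set (V × ℤ × V)) (π : ℕ → V × ℤ × V) : Prop :=
  (∀ i, π i ∈ E) ∧ ∀ i, (π i).2.2 = (π (i + 1)).1

/-- The total weight of a finite path. -/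
def pathWeight {V : Type} (p : List (V × ℤ × V)) : ℤ :=
  (p.map fun e => e.2.1).sum

/-- A sequence of integer weights satisfies mean payoff if the liminf of the
averages of its prefixes is nonnegative. -/
def MeanPayoffSeq (w : ℕ → ℤ) : Prop :=
  0 ≤ Filter.atTop.liminf (fun ℓ : ℕ => (∑ i ∈ Finset.range ℓ, (w i : ℝ)) / (ℓ : ℝ))

/-- A graph (given by its edge set) satisfies mean payoff if all its infinite paths do. -/
def SatMP {V : Type} (E : Set (V × ℤ × V)) : Prop :=
  ∀ π : ℕ → V × ℤ × V, InfPath E π → MeanPayoffSeq (fun i => (π i).2.1)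

/-- A cycle: a nonempty finite path whose first and last vertices coincide. -/
def IsCycle {V : Type} (E : Set (V × ℤ × V)) (p : List (V × ℤ × V)) : Prop :=
  p ≠ [] ∧ ∃ v, FinPath E v p ∧ lastV v p = v

/-- A `W`-graph: a finite set of vertices, edges labelled by weights in `W`,
and an initial vertex from which every vertex is reachable. -/
structure WGraph (W : Finset ℤ) where
  V : Type
  fin : Fintype V
  E : Set (V × ℤ × V)
  init : V
  wt : ∀ e ∈ E, e.2.1 ∈ W
  reach : ∀ v : V, ∃ p, FinPath E init p ∧ lastV init p = v

attribute [instance] WGraph.fin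

/-- The `W`-linear graph on a set `A ⊆ ℤ`: vertices are the elements of `A`, and
for `v, v' ∈ A` and `w ∈ W` there is an edge `(v, w, v')` whenever `v' - v ≤ w`. -/
def LinE (W : Finset ℤ) (A : Set ℤ) : Set (ℤ × ℤ × ℤ) :=
  {e | e.1 ∈ A ∧ e.2.2 ∈ A ∧ e.2.1 ∈ W ∧ e.2.2 - e.1 ≤ e.2.1}

/-- A homomorphism of labelled graphs (no requirement on initial vertices). -/
def IsHom {V U : Type} (E : Set (V × ℤ × V)) (E' : Set (U × ℤ × U)) (φ : V → U) : Prop :=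
  ∀ e ∈ E, (φ e.1, e.2.1, φ e.2.2) ∈ E'

/-- A graph (given by its edge set) is `(n,W)`-universal if it satisfies mean payoff and
every `(n,W)`-graph satisfying mean payoff admits a homomorphism into it. -/
def Universal (n : ℕ) (W : Finset ℤ) {U : Type} (EU : Set (U × ℤ × U)) : Prop :=
  SatMP EU ∧
    ∀ G : WGraph W, Fintype.card G.V ≤ n → SatMP G.E → ∃ φ : G.V → U, IsHom G.E EU φ

/-- The set of weights `(-N, N)`: integers `w` with `-N < w < N`. -/
noncomputable def Wball (N : ℕ) : Finset ℤ := Finset.Ioo (-(N : ℤ)) (N : ℤ)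

/-- `φ` is the distance function from the initial vertex: `φ v` is the minimum total
weight of a finite path from the initial vertex to `v`. -/
def IsDistFrom {W : Finset ℤ} (G : WGraph W) (φ : G.V → ℤ) : Prop :=
  ∀ v : G.V,
    (∃ p, FinPath G.E G.init p ∧ lastV G.init p = v ∧ pathWeight p = φ v) ∧
    ∀ p, FinPath G.E G.init p → lastV G.init p = v → φ v ≤ pathWeight p

-- bound below for averages
lemma avg_ge (w : ℕ → ℤ) (B : ℝ) (hB : ∀ i, B ≤ (w i : ℝ)) (ℓ : ℕ) :
    min B 0 ≤ (∑ i ∈ Finset.range ℓ, (w i : ℝ)) / (ℓ : ℝ) := by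
  rcases Nat.eq_zero_or_pos ℓ with h | h
  · simp [h]
  · have hℓ : (0 : ℝ) < ℓ := by exact_mod_cast h
    refine le_trans (min_le_left _ _) ?_
    rw [le_div_iff₀ hℓ]
    calc B * (ℓ:ℝ) = ∑ _i ∈ Finset.range ℓ, B := by simp [mul_comm]
      _ ≤ _ := Finset.sum_le_sum (fun i _ => hB i)

lemma avg_le (w : ℕ → ℤ) (M : ℝ) (hM : ∀ i, (w i : ℝ) ≤ M) (ℓ : ℕ) :
    (∑ i ∈ Finset.range ℓ, (w i : ℝ)) / (ℓ : ℝ) ≤ max M 0 := by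
  rcases Nat.eq_zero_or_pos ℓ with h | h
  · simp [h]
  · have hℓ : (0 : ℝ) < ℓ := by exact_mod_cast h
    refine le_trans ?_ (le_max_left _ _)
    rw [div_le_iff₀ hℓ]
    calc (∑ i ∈ Finset.range ℓ, (w i : ℝ)) ≤ ∑ _i ∈ Finset.range ℓ, M :=
          Finset.sum_le_sum (fun i _ => hM i)
      _ = M * ℓ := by simp [mul_comm]

lemma meanPayoffSeq_of_prefix_bounded (w : ℕ → ℤ) (C : ℤ) (hC : 0 ≤ C) (M : ℤ)
    (hM : ∀ i, w i ≤ M)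
    (h : ∀ ℓ, -C ≤ ∑ i ∈ Finset.range ℓ, w i) : MeanPayoffSeq w := by
  set v : ℕ → ℝ := fun ℓ : ℕ => (∑ i ∈ Finset.range ℓ, (w i : ℝ)) / (ℓ : ℝ) with hv
  have hsum : ∀ ℓ, ((-C : ℝ)) ≤ ∑ i ∈ Finset.range ℓ, (w i : ℝ) := by
    intro ℓ; have := h ℓ; exact_mod_cast this
  have hlow : ∀ ℓ : ℕ, 1 ≤ ℓ → (-C : ℝ) / ℓ ≤ v ℓ := by
    intro ℓ hℓ
    have hℓ' : (0 : ℝ) ≤ ℓ := by positivity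
    exact div_le_div_of_nonneg_right (hsum ℓ) hℓ'
  have htend : Tendsto (fun ℓ : ℕ => (-C : ℝ) / ℓ) atTop (nhds 0) :=
    tendsto_const_div_atTop_nhds_zero_nat _
  have h0 : Filter.liminf (fun ℓ : ℕ => (-C : ℝ) / ℓ) atTop = 0 := htend.liminf_eq
  have hco : IsCoboundedUnder (· ≥ ·) atTop v := by
    apply Filter.IsBoundedUnder.isCoboundedUnder_ge
    exact Filter.isBoundedUnder_of ⟨max (M : ℝ) 0, fun ℓ => avg_le w M (fun i => by exact_mod_cast hM i) ℓ⟩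
  have hbd : IsBoundedUnder (· ≥ ·) atTop (fun ℓ : ℕ => (-C : ℝ) / ℓ) := by
    apply Filter.isBoundedUnder_of
    refine ⟨min (-C : ℝ) 0, fun ℓ => ?_⟩
    rcases Nat.eq_zero_or_pos ℓ with h' | h'
    · simp [h', min_le_right]
    · have h1 : (1:ℝ) ≤ ℓ := by exact_mod_cast h'
      refine le_trans (min_le_left _ _) ?_
      rw [neg_div]
      have : (C:ℝ)/ℓ ≤ C := div_le_self (by exact_mod_cast hC) h1
      linarith
  have := Filter.liminf_le_liminf (f := atTop)
    (u := fun ℓ : ℕ => (-C : ℝ) / ℓ) (v := v)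
    (by filter_upwards [eventually_ge_atTop 1] with ℓ hℓ; exact hlow ℓ hℓ) hbd hco
  unfold MeanPayoffSeq
  rw [← h0]
  exact this

lemma periodic_shift (w : ℕ → ℤ) (L : ℕ) (hper : ∀ i, w (i + L) = w i) :
    ∀ m i, w (m * L + i) = w i := by
  intro m
  induction m with
  | zero => simp
  | succ m ih =>
    intro i
    have h : (m+1) * L + i = (m * L + i) + L := by ring
    rw [h, hper, ih]

lemma periodic_mod (w : ℕ → ℤ) (L : ℕ) (hL : 1 ≤ L) (hper : ∀ i, w (i + L) = w i)
    (i : ℕ) : w i = w (i % L) := by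
  conv_lhs => rw [← Nat.div_add_mod i L, Nat.mul_comm]
  rw [periodic_shift w L hper]

-- periodic sequence with negative period sum is not MeanPayoff
lemma not_meanPayoffSeq_of_periodic_neg (w : ℕ → ℤ) (L : ℕ) (hL : 1 ≤ L)
    (hper : ∀ i, w (i + L) = w i) (c : ℤ) (hc : c = ∑ i ∈ Finset.range L, w i)
    (hneg : c < 0) : ¬ MeanPayoffSeq w := by
  have hmul : ∀ m : ℕ, ∑ i ∈ Finset.range (m * L), w i = m * c := by
    intro m
    induction m with
    | zero => simp
    | succ m ih =>
      have h : (m+1) * L = m * L + L := by ring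
      rw [h, Finset.sum_range_add, ih]
      have h2 : ∑ i ∈ Finset.range L, w (m * L + i) = ∑ i ∈ Finset.range L, w i :=
        Finset.sum_congr rfl (fun i _ => periodic_shift w L hper m i)
      rw [h2, ← hc]; push_cast; ring
  intro hmp
  unfold MeanPayoffSeq at hmp
  set v : ℕ → ℝ := fun ℓ : ℕ => (∑ i ∈ Finset.range ℓ, (w i : ℝ)) / (ℓ : ℝ) with hv
  have hLpos : (0:ℝ) < L := by exact_mod_cast hL
  have hfreq : ∃ᶠ ℓ in atTop, v ℓ ≤ (c : ℝ) / L := by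
    rw [Filter.frequently_atTop]
    intro N
    refine ⟨(N+1) * L, ?_, ?_⟩
    · calc N ≤ N + 1 := Nat.le_succ N
        _ ≤ (N+1) * L := Nat.le_mul_of_pos_right _ hL
    · have hsum : (∑ i ∈ Finset.range ((N+1) * L), (w i : ℝ)) = ((N+1) : ℝ) * c := by
        have := hmul (N+1)
        exact_mod_cast congrArg (Int.cast : ℤ → ℝ) this
      have hpos : (0:ℝ) < (((N+1) * L : ℕ) : ℝ) := by
        have : 0 < (N+1) * L := by positivity
        exact_mod_cast this
      show (∑ i ∈ Finset.range ((N+1) * L), (w i : ℝ)) / (((N+1) * L : ℕ) : ℝ) ≤ (c : ℝ) / L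
      rw [hsum, div_le_div_iff₀ hpos hLpos]
      push_cast
      ring_nf
      exact le_refl _
  -- lower bound for v
  set B : ℤ := -(∑ j ∈ Finset.range L, |w j|) with hB
  have hBle : ∀ i, (B : ℝ) ≤ (w i : ℝ) := by
    intro i
    have h1 : w i = w (i % L) := periodic_mod w L hL hper i
    have h2 : i % L < L := Nat.mod_lt _ hL
    have h3 : B ≤ w (i % L) := by
      have hsingle : |w (i % L)| ≤ ∑ j ∈ Finset.range L, |w j| :=
        Finset.single_le_sum (f := fun j => |w j|) (fun j _ => abs_nonneg _)
          (Finset.mem_range.mpr h2)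
      calc B ≤ -|w (i % L)| := by rw [hB]; omega
        _ ≤ w (i % L) := neg_abs_le _
    rw [h1]; exact_mod_cast h3
  have hbd : IsBoundedUnder (· ≥ ·) atTop v :=
    Filter.isBoundedUnder_of ⟨min (B:ℝ) 0, fun ℓ => avg_ge w (B:ℝ) hBle ℓ⟩
  have hli : Filter.liminf v atTop ≤ (c : ℝ) / L :=
    Filter.liminf_le_of_frequently_le hfreq hbd
  have : (c : ℝ) / L < 0 := div_neg_of_neg_of_pos (by exact_mod_cast hneg) hLpos
  linarith

-- ### Walks

def Walk {V : Type} (E : Set (V × ℤ × V)) (x : V) (p : List (V × ℤ × V)) (y : V) : Prop :=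
  (∀ e ∈ p, e ∈ E) ∧ List.Chain' (fun e e' => e.2.2 = e'.1) p ∧
    (∀ h : p ≠ [], (p.head h).1 = x ∧ (p.getLast h).2.2 = y) ∧ (p = [] → x = y)

lemma Walk.nil {V : Type} (E : Set (V × ℤ × V)) (x : V) : Walk E x [] x := by
  refine ⟨by simp, List.isChain_nil, fun h => absurd rfl h, fun _ => rfl⟩

lemma Walk.single {V : Type} (E : Set (V × ℤ × V)) (e : V × ℤ × V) (he : e ∈ E) :
    Walk E e.1 [e] e.2.2 :=
  ⟨by simpa using he, List.isChain_singleton _, fun _ => ⟨rfl, rfl⟩, by simp⟩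

lemma Walk.append {V : Type} {E : Set (V × ℤ × V)} {x y z : V} {p q : List (V × ℤ × V)}
    (hp : Walk E x p y) (hq : Walk E y q z) : Walk E x (p ++ q) z := by
  obtain ⟨hp1, hp2, hp3, hp4⟩ := hp
  obtain ⟨hq1, hq2, hq3, hq4⟩ := hq
  refine ⟨?_, ?_, ?_, ?_⟩
  · intro e he
    rcases List.mem_append.mp he with h | h
    · exact hp1 e h
    · exact hq1 e h
  · unfold List.Chain'
    rw [List.isChain_append]
    refine ⟨hp2, hq2, ?_⟩
    intro a ha b hb
    have hpne : p ≠ [] := by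
      intro h; subst h; simp at ha
    have hqne : q ≠ [] := by
      intro h; subst h; simp at hb
    have ha' : a = p.getLast hpne := by
      rw [List.getLast?_eq_getLast hpne] at ha; exact (Option.mem_some_iff.mp ha).symm
    have hb' : b = q.head hqne := by
      rw [List.head?_eq_head hqne] at hb; exact (Option.mem_some_iff.mp hb).symm
    rw [ha', hb', (hp3 hpne).2, (hq3 hqne).1]
  · intro h
    rcases eq_or_ne q [] with rfl | hqne
    · have hpne : p ≠ [] := by simpa using h
      constructor
      · rw [List.head_append_left hpne]
        exact (hp3 hpne).1
      · rw [List.getLast_append_left h rfl]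
        exact ((hp3 hpne).2).trans (hq4 rfl)
    · rcases eq_or_ne p [] with rfl | hpne
      · constructor
        · rw [List.head_append_right h rfl]
          exact (hp4 rfl) ▸ (hq3 hqne).1
        · rw [List.getLast_append_right hqne]
          exact (hq3 hqne).2
      · constructor
        · rw [List.head_append_left hpne]
          exact (hp3 hpne).1
        · rw [List.getLast_append_right hqne]
          exact (hq3 hqne).2
  · intro h
    rw [List.append_eq_nil_iff] at h
    rw [hp4 h.1, hq4 h.2]

lemma Walk.map {V U : Type} {E : Set (V × ℤ × V)} {E' : Set (U × ℤ × U)} {φ : V → U}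
    (hφ : IsHom E E' φ) {x y : V} {p : List (V × ℤ × V)} (hp : Walk E x p y) :
    Walk E' (φ x) (p.map (fun e => (φ e.1, e.2.1, φ e.2.2))) (φ y) := by
  obtain ⟨h1, h2, h3, h4⟩ := hp
  refine ⟨?_, ?_, ?_, ?_⟩
  · intro e he
    rw [List.mem_map] at he
    obtain ⟨e', he', rfl⟩ := he
    exact hφ e' (h1 e' he')
  · unfold List.Chain'
    rw [List.isChain_map]
    exact List.IsChain.imp (fun a b h => by simp [h]) h2
  · intro h
    have hpne : p ≠ [] := by
      intro h'; subst h'; simp at h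
    constructor
    · rw [List.head_map]
      exact congrArg φ ((h3 hpne).1)
    · rw [List.getLast_map]
      exact congrArg φ ((h3 hpne).2)
  · intro h
    rw [List.map_eq_nil_iff] at h
    exact congrArg φ (h4 h)

lemma Walk.toFinPath {V : Type} {E : Set (V × ℤ × V)} {x y : V} {p : List (V × ℤ × V)}
    (hp : Walk E x p y) : FinPath E x p ∧ lastV x p = y := by
  obtain ⟨h1, h2, h3, h4⟩ := hp
  refine ⟨⟨h1, h2, fun h => (h3 h).1⟩, ?_⟩
  rcases eq_or_ne p [] with rfl | hne
  · exact (h4 rfl).symm ▸ rfl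
  · unfold lastV
    rw [List.getLastD_eq_getLast?, List.getLast?_eq_getLast hne, Option.getD_some]
    exact (h3 hne).2

lemma pathWeight_append {V : Type} (p q : List (V × ℤ × V)) :
    pathWeight (p ++ q) = pathWeight p + pathWeight q := by
  unfold pathWeight; rw [List.map_append, List.sum_append]

lemma pathWeight_map {V U : Type} (φ : V → U) (p : List (V × ℤ × V)) :
    pathWeight (p.map (fun e => (φ e.1, e.2.1, φ e.2.2))) = pathWeight p := by
  unfold pathWeight
  rw [List.map_map]
  rfl

-- new part
lemma sum_range_getD {α : Type} (l : List α) (f : α → ℤ) (d : α) :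
    ∑ i ∈ Finset.range l.length, f (l.getD i d) = (l.map f).sum := by
  induction l with
  | nil => simp
  | cons a l ih =>
    rw [List.length_cons, Finset.sum_range_succ']
    simp only [List.getD_cons_succ, List.getD_cons_zero, List.map_cons, List.sum_cons]
    rw [ih]; ring

lemma mod_succ_lt (t L : ℕ) (h : t % L + 1 < L) : (t+1) % L = t % L + 1 := by
  have hL2 : 2 ≤ L := by omega
  rw [Nat.add_mod, Nat.mod_eq_of_lt (show 1 < L by omega), Nat.mod_eq_of_lt h]

lemma mod_succ_eq (t L : ℕ) (hL : 1 ≤ L) (h : t % L + 1 = L) : (t+1) % L = 0 := by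
  rcases Nat.lt_or_ge 1 L with h' | h'
  · rw [Nat.add_mod, Nat.mod_eq_of_lt h', h, Nat.mod_self]
  · interval_cases L
    omega

lemma getElem_idx_congr {α : Type} (l : List α) {i j : ℕ} (h : i = j) (hi : i < l.length) :
    l[i]'hi = l[j]'(h ▸ hi) := by subst h; rfl

lemma not_satMP_of_neg_cycle {U : Type} (EU : Set (U × ℤ × U)) (p : List (U × ℤ × U))
    (hne : p ≠ []) (z : U) (hw : Walk EU z p z) (hneg : pathWeight p < 0) :
    ¬ SatMP EU := by
  obtain ⟨h1, h2, h3, h4⟩ := hw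
  have hL : 1 ≤ p.length := List.length_pos_iff.mpr hne
  have hgetlt : ∀ t : ℕ, t % p.length < p.length := fun t => Nat.mod_lt _ hL
  set π : ℕ → U × ℤ × U := fun t => p[t % p.length]'(hgetlt t) with hπ
  intro hmp
  have hchainget : ∀ (i : ℕ) (h : i + 1 < p.length),
      (p[i]'(by omega)).2.2 = (p[i+1]'h).1 := by
    intro i h
    have := List.isChain_iff_getElem.mp h2 i (by omega)
    simpa [List.get_eq_getElem] using this
  have hinf : InfPath EU π := by
    constructor
    · intro t
      exact h1 _ (List.getElem_mem (hgetlt t))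
    · intro t
      rcases Nat.lt_or_ge (t % p.length + 1) p.length with hlt | hge
      · have hmod : (t+1) % p.length = t % p.length + 1 := mod_succ_lt _ _ hlt
        show (p[t % p.length]'(hgetlt t)).2.2 = (p[(t+1) % p.length]'(hgetlt (t+1))).1
        rw [getElem_idx_congr p hmod (hgetlt (t+1))]
        exact hchainget _ _
      · have heq : t % p.length + 1 = p.length := by
          have := hgetlt t; omega
        have hmod : (t+1) % p.length = 0 := mod_succ_eq _ _ hL heq
        show (p[t % p.length]'(hgetlt t)).2.2 = (p[(t+1) % p.length]'(hgetlt (t+1))).1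
        have e1 : p[t % p.length]'(hgetlt t) = p.getLast hne := by
          rw [List.getLast_eq_getElem]
          congr 1
          omega
        have e2 : p[(t+1) % p.length]'(hgetlt (t+1)) = p.head hne := by
          rw [getElem_idx_congr p hmod (hgetlt (t+1)), List.head_eq_getElem]
        rw [e1, e2, (h3 hne).2, (h3 hne).1]
  have := hmp π hinf
  refine not_meanPayoffSeq_of_periodic_neg (fun t => (π t).2.1) p.length hL ?_
    (pathWeight p) ?_ hneg this
  · intro i
    simp only [hπ]
    rw [getElem_idx_congr p (Nat.add_mod_right i p.length) (hgetlt (i + p.length))]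
  · unfold pathWeight
    rw [← sum_range_getD p (fun e => e.2.1) (p.head hne)]
    apply Finset.sum_congr rfl
    intro i hi
    rw [Finset.mem_range] at hi
    simp only [hπ]
    rw [List.getD_eq_getElem _ _ hi, getElem_idx_congr p (Nat.mod_eq_of_lt hi) (hgetlt i)]

lemma satMP_of_potential {V : Type} [Fintype V] (E : Set (V × ℤ × V)) (ψ : V → ℤ)
    (hψ : ∀ e ∈ E, ψ e.2.2 - ψ e.1 ≤ e.2.1) (M : ℤ) (hM : ∀ e ∈ E, e.2.1 ≤ M) :
    SatMP E := by
  intro π hπ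
  obtain ⟨hmem, hchain⟩ := hπ
  set w : ℕ → ℤ := fun i => (π i).2.1 with hwdef
  have hne' : (Finset.univ.image ψ).Nonempty := ⟨ψ (π 0).1, Finset.mem_image_of_mem _ (Finset.mem_univ _)⟩
  set mx := (Finset.univ.image ψ).max' hne' with hmx
  set mn := (Finset.univ.image ψ).min' hne' with hmn
  have hub : ∀ v : V, ψ v ≤ mx := fun v =>
    Finset.le_max' _ _ (Finset.mem_image_of_mem _ (Finset.mem_univ v))
  have hlb : ∀ v : V, mn ≤ ψ v := fun v =>
    Finset.min'_le _ _ (Finset.mem_image_of_mem _ (Finset.mem_univ v))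
  have hC : 0 ≤ mx - mn := by
    have := hub (π 0).1
    have := hlb (π 0).1
    omega
  have hpre : ∀ ℓ, ψ (π ℓ).1 - ψ (π 0).1 ≤ ∑ i ∈ Finset.range ℓ, w i := by
    intro ℓ
    induction ℓ with
    | zero => simp
    | succ ℓ ih =>
      rw [Finset.sum_range_succ]
      have h1 : ψ (π ℓ).2.2 - ψ (π ℓ).1 ≤ w ℓ := hψ _ (hmem ℓ)
      rw [hchain ℓ] at h1
      omega
  apply meanPayoffSeq_of_prefix_bounded w (mx - mn) hC M
  · intro i
    exact hM _ (hmem i)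
  · intro ℓ
    have := hpre ℓ
    have h1 := hub (π 0).1
    have h2 := hlb (π ℓ).1
    omega

-- arc lists
def arcL (n K : ℕ) (r : ℕ → ℕ) : List ℤ :=
  (List.range K).flatMap (fun j => List.replicate (r j) ((n:ℤ)^j))

lemma arcL_length (n K : ℕ) (r : ℕ → ℕ) :
    (arcL n K r).length = ∑ j ∈ Finset.range K, r j := by
  induction K with
  | zero => simp [arcL]
  | succ K ih =>
    rw [arcL, List.range_succ, List.flatMap_append, List.length_append, ← arcL, ih,
      Finset.sum_range_succ]
    simp

lemma arcL_sum (n K : ℕ) (r : ℕ → ℕ) :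
    (arcL n K r).sum = ∑ j ∈ Finset.range K, (r j : ℤ) * (n:ℤ)^j := by
  induction K with
  | zero => simp [arcL]
  | succ K ih =>
    rw [arcL, List.range_succ, List.flatMap_append, List.sum_append, ← arcL, ih,
      Finset.sum_range_succ]
    simp [List.sum_replicate, mul_comm]

lemma arcL_mem (n K : ℕ) (r : ℕ → ℕ) (x : ℤ) (hx : x ∈ arcL n K r) :
    ∃ j < K, x = (n:ℤ)^j := by
  rw [arcL, List.mem_flatMap] at hx
  obtain ⟨j, hj, hx⟩ := hx
  rw [List.mem_range] at hj
  exact ⟨j, hj, List.eq_of_mem_replicate hx⟩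

-- window lemmas
lemma sum_range_getD' (l : List ℤ) :
    ∑ i ∈ Finset.range l.length, l.getD i 0 = l.sum := by
  induction l with
  | nil => simp
  | cons a l ih =>
    rw [List.length_cons, Finset.sum_range_succ', List.sum_cons]
    simp only [List.getD_cons_succ, List.getD_cons_zero]
    rw [ih]; ring

lemma flatten_getD (LL : List (List ℤ)) (i : ℕ) (hi : i < LL.length) (t : ℕ)
    (ht : t < (LL.getD i []).length) :
    LL.flatten.getD ((((LL.take i).map List.length).sum) + t) 0 = (LL.getD i []).getD t 0 := by
  induction LL generalizing i with
  | nil => simp at hi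
  | cons l LL ih =>
    cases i with
    | zero =>
      simp only [List.take_zero, List.map_nil, List.sum_nil, Nat.zero_add, List.getD_cons_zero] at *
      rw [List.flatten_cons, List.getD_append _ _ _ _ ht]
    | succ i =>
      simp only [List.take_succ_cons, List.map_cons, List.sum_cons, List.getD_cons_succ] at *
      rw [List.flatten_cons]
      rw [Nat.add_assoc, List.getD_append_right _ _ _ _ (Nat.le_add_right _ _),
        Nat.add_sub_cancel_left]
      exact ih i (by simpa using hi) ht

lemma window_sum (LL : List (List ℤ)) (i : ℕ) (hi : i < LL.length) :
    ∑ t ∈ Finset.range (LL.getD i []).length,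
      LL.flatten.getD ((((LL.take i).map List.length).sum) + t) 0 = (LL.getD i []).sum := by
  have h : ∀ t ∈ Finset.range (LL.getD i []).length,
      LL.flatten.getD ((((LL.take i).map List.length).sum) + t) 0 = (LL.getD i []).getD t 0 := by
    intro t ht
    exact flatten_getD LL i hi t (Finset.mem_range.mp ht)
  rw [Finset.sum_congr rfl h]
  exact sum_range_getD' _

-- digit uniqueness
lemma digits_unique (n : ℕ) (hn : 2 ≤ n) :
    ∀ (K : ℕ) (r r' : ℕ → ℕ), (∀ j, j < K → r j < n) → (∀ j, j < K → r' j < n) →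
    (∑ j ∈ Finset.range K, r j * n^j) = (∑ j ∈ Finset.range K, r' j * n^j) →
    ∀ j < K, r j = r' j := by
  intro K
  induction K with
  | zero => intro r r' _ _ _ j hj; omega
  | succ K ih =>
    intro r r' hr hr' heq j hj
    have hsplit : ∀ s : ℕ → ℕ, (∑ j ∈ Finset.range (K+1), s j * n^j)
        = s 0 + n * (∑ j ∈ Finset.range K, s (j+1) * n^j) := by
      intro s
      rw [Finset.sum_range_succ', pow_zero, mul_one, Finset.mul_sum, add_comm]
      congr 1
      apply Finset.sum_congr rfl
      intro j _
      rw [pow_succ]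
      ring
    rw [hsplit r, hsplit r'] at heq
    have h0 : r 0 = r' 0 := by
      have h1 : (r 0 + n * (∑ j ∈ Finset.range K, r (j+1) * n^j)) % n = r 0 % n :=
        Nat.add_mul_mod_self_left _ _ _
      have h2 : (r' 0 + n * (∑ j ∈ Finset.range K, r' (j+1) * n^j)) % n = r' 0 % n :=
        Nat.add_mul_mod_self_left _ _ _
      have hr0 : r 0 < n := hr 0 (by omega)
      have hr0' : r' 0 < n := hr' 0 (by omega)
      rw [heq] at h1
      rw [h2] at h1
      rw [Nat.mod_eq_of_lt hr0, Nat.mod_eq_of_lt hr0'] at h1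
      omega
    have hrest : (∑ j ∈ Finset.range K, r (j+1) * n^j) = (∑ j ∈ Finset.range K, r' (j+1) * n^j) := by
      have hn0 : 0 < n := by omega
      have := heq
      rw [h0] at this
      exact Nat.eq_of_mul_eq_mul_left hn0 (by omega)
    rcases Nat.eq_zero_or_pos j with rfl | hjpos
    · exact h0
    · have := ih (fun j => r (j+1)) (fun j => r' (j+1))
        (fun j hj => hr (j+1) (by omega)) (fun j hj => hr' (j+1) (by omega)) hrest
        (j-1) (by omega)
      have hj1 : j - 1 + 1 = j := by omega
      rw [hj1] at this
      exact this

-- ### cyclic graphs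
def cycE (n : ℕ) (f : ℕ → ℤ) : Set (ZMod n × ℤ × ZMod n) :=
  {e | ∃ v : ZMod n, e = (v, f v.val, v + 1)}

def cwalk (n : ℕ) (f : ℕ → ℤ) (p L : ℕ) : List (ZMod n × ℤ × ZMod n) :=
  List.ofFn (fun t : Fin L =>
    (((p + (t : ℕ) : ℕ) : ZMod n), f (((p + (t : ℕ) : ℕ) : ZMod n)).val,
      ((p + (t : ℕ) + 1 : ℕ) : ZMod n)))

lemma cwalk_walk (n : ℕ) [NeZero n] (f : ℕ → ℤ) (p L : ℕ) :
    Walk (cycE n f) ((p : ZMod n)) (cwalk n f p L) (((p + L : ℕ) : ZMod n)) := by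
  refine ⟨?_, ?_, ?_, ?_⟩
  · intro e he
    rw [cwalk, List.mem_ofFn] at he
    obtain ⟨t, rfl⟩ := he
    exact ⟨((p + (t : ℕ) : ℕ) : ZMod n), by push_cast; ring_nf⟩
  · unfold List.Chain'
    rw [List.isChain_iff_getElem]
    intro i h
    simp only [cwalk, List.length_ofFn] at h ⊢
    rw [List.getElem_ofFn, List.getElem_ofFn]
    rfl
  · intro h
    have hL : 0 < L := by
      by_contra h'
      have : L = 0 := by omega
      subst this
      simp [cwalk] at h
    have hlen : 0 < (cwalk n f p L).length := by simp [cwalk]; omega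
    constructor
    · rw [List.head_eq_getElem h]
      simp only [cwalk]
      rw [List.getElem_ofFn]
      simp
    · rw [List.getLast_eq_getElem h]
      simp only [cwalk, List.length_ofFn]
      rw [List.getElem_ofFn]
      have hnat : ((p + (L-1) + 1 : ℕ) : ZMod n) = ((p + L : ℕ) : ZMod n) := by
        congr 1
        omega
      exact hnat
  · intro h
    have : L = 0 := by
      by_contra h'
      have : 0 < L := by omega
      rw [cwalk] at h
      apply List.ofFn_eq_nil_iff.mp at h
      omega
    subst this
    norm_num

lemma cwalk_weight (n : ℕ) [NeZero n] (f : ℕ → ℤ) (p L : ℕ) (h : p + L ≤ n) :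
    pathWeight (cwalk n f p L) = ∑ t ∈ Finset.range L, f (p + t) := by
  rw [pathWeight, cwalk, List.map_ofFn, List.sum_ofFn]
  rw [← Fin.sum_univ_eq_sum_range (fun t => f (p + t)) L]
  apply Finset.sum_congr rfl
  intro t _
  simp only [Function.comp]
  congr 1
  rw [ZMod.val_natCast]
  exact Nat.mod_eq_of_lt (by omega)

lemma satMP_cyc (n : ℕ) (hn : 2 ≤ n) (f : ℕ → ℤ)
    (hsum : ∑ t ∈ Finset.range n, f t = 0) : SatMP (cycE n f) := by
  haveI : NeZero n := ⟨by omega⟩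
  haveI : Fact (1 < n) := ⟨by omega⟩
  set ψ : ZMod n → ℤ := fun v => ∑ t ∈ Finset.range v.val, f t with hψdef
  have hMne : ((Finset.range n).image f).Nonempty := ⟨f 0, Finset.mem_image_of_mem f (by simp; omega)⟩
  set M := ((Finset.range n).image f).max' hMne with hM
  apply satMP_of_potential _ ψ ?_ M ?_
  · rintro e ⟨v, rfl⟩
    simp only [hψdef]
    have hvval : (v + 1).val = (v.val + 1) % n := by
      rw [ZMod.val_add, ZMod.val_one]
    have hvlt : v.val < n := ZMod.val_lt v
    rcases Nat.lt_or_ge (v.val + 1) n with hlt | hge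
    · rw [hvval, Nat.mod_eq_of_lt hlt, Finset.sum_range_succ]
      omega
    · have hveq : v.val = n - 1 := by omega
      have : (v.val + 1) % n = 0 := by
        rw [hveq, Nat.sub_add_cancel (by omega), Nat.mod_self]
      rw [hvval, this]
      simp only [Finset.range_zero, Finset.sum_empty]
      have h99 : n - 1 + 1 = n := by omega
      have hdecomp : ∑ t ∈ Finset.range n, f t = (∑ t ∈ Finset.range (n-1), f t) + f (n-1) := by
        conv_lhs => rw [← h99]
        rw [Finset.sum_range_succ]
      rw [hveq]
      linarith [hsum, hdecomp]
  · rintro e ⟨v, rfl⟩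
    apply Finset.le_max'
    exact Finset.mem_image_of_mem f (Finset.mem_range.mpr (ZMod.val_lt v))

-- construction
def dvec (K q : ℕ) (a : ℕ → ℕ → ℕ) : ℕ → ℕ := fun j => q - ∑ i ∈ Finset.range K, a i j

def negw (n K q : ℕ) : ℤ := -(q:ℤ) * ∑ j ∈ Finset.range K, (n:ℤ)^j

def blocksL (n K q : ℕ) (a : ℕ → ℕ → ℕ) : List (List ℤ) :=
  ((List.range K).map (fun i => arcL n K (a i))) ++ [[negw n K q], arcL n K (dvec K q a)]

def wl (n K q : ℕ) (a : ℕ → ℕ → ℕ) : List ℤ := (blocksL n K q a).flatten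

def wfn (n K q : ℕ) (a : ℕ → ℕ → ℕ) : ℕ → ℤ := fun t => (wl n K q a).getD t 0

def rowlen (K : ℕ) (a : ℕ → ℕ → ℕ) (i : ℕ) : ℕ := ∑ j ∈ Finset.range K, a i j

def PP (K : ℕ) (a : ℕ → ℕ → ℕ) (i : ℕ) : ℕ := ∑ i' ∈ Finset.range i, rowlen K a i'

def sVal (n K : ℕ) (r : ℕ → ℕ) : ℤ := ∑ j ∈ Finset.range K, (r j : ℤ) * (n:ℤ)^j

def lenD (K q : ℕ) (a : ℕ → ℕ → ℕ) : ℕ := ∑ j ∈ Finset.range K, dvec K q a j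

-- helpers
lemma range_map_sum {M : Type} [AddCommMonoid M] (g : ℕ → M) (i : ℕ) :
    ((List.range i).map g).sum = ∑ x ∈ Finset.range i, g x := by
  induction i with
  | zero => simp
  | succ i ih => rw [List.range_succ, List.map_append, List.sum_append, ih, Finset.sum_range_succ]; simp

lemma range_map_getD {α : Type} (g : ℕ → α) (K i : ℕ) (hi : i < K) (d : α) :
    ((List.range K).map g).getD i d = g i := by
  have hlen : i < ((List.range K).map g).length := by simpa using hi
  rw [List.getD_eq_getElem _ _ hlen, List.getElem_map, List.getElem_range]

-- block offsets
lemma blocks_length (n K q : ℕ) (a : ℕ → ℕ → ℕ) : (blocksL n K q a).length = K + 2 := by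
  simp [blocksL]

lemma blocks_take_lt (n K q : ℕ) (a : ℕ → ℕ → ℕ) (i : ℕ) (hi : i ≤ K) :
    (((blocksL n K q a).take i).map List.length).sum = PP K a i := by
  have h1 : (blocksL n K q a).take i = ((List.range i).map (fun i' => arcL n K (a i'))) := by
    rw [blocksL, List.take_append_of_le_length (by simpa using hi), ← List.map_take,
      List.take_range]
    congr 2
    omega
  rw [h1, List.map_map]
  have := range_map_sum (fun i' => (arcL n K (a i')).length) i
  rw [show (List.map (List.length ∘ fun i' => arcL n K (a i')) (List.range i))
      = (List.range i).map (fun i' => (arcL n K (a i')).length) from rfl, this]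
  apply Finset.sum_congr rfl
  intro i' _
  rw [arcL_length]
  rfl

lemma blocks_getD_lt (n K q : ℕ) (a : ℕ → ℕ → ℕ) (i : ℕ) (hi : i < K) :
    (blocksL n K q a).getD i [] = arcL n K (a i) := by
  rw [blocksL, List.getD_append _ _ _ _ (by simpa using hi)]
  exact range_map_getD _ K i hi []

lemma blocks_getD_K (n K q : ℕ) (a : ℕ → ℕ → ℕ) :
    (blocksL n K q a).getD K [] = [negw n K q] := by
  rw [blocksL, List.getD_append_right _ _ _ _ (by simp)]
  simp

lemma blocks_getD_K1 (n K q : ℕ) (a : ℕ → ℕ → ℕ) :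
    (blocksL n K q a).getD (K+1) [] = arcL n K (dvec K q a) := by
  rw [blocksL, List.getD_append_right _ _ _ _ (by simp)]
  simp

lemma blocks_take_K1 (n K q : ℕ) (a : ℕ → ℕ → ℕ) :
    (((blocksL n K q a).take (K+1)).map List.length).sum = PP K a K + 1 := by
  have h1 : (blocksL n K q a).take (K+1)
      = ((List.range K).map (fun i' => arcL n K (a i'))) ++ [[negw n K q]] := by
    rw [blocksL]
    rw [show ((List.range K).map (fun i' => arcL n K (a i'))) ++ [[negw n K q], arcL n K (dvec K q a)]
        = (((List.range K).map (fun i' => arcL n K (a i'))) ++ [[negw n K q]]) ++ [arcL n K (dvec K q a)] by simp]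
    rw [List.take_append_of_le_length (by simp)]
    rw [List.take_of_length_le (by simp)]
  rw [h1, List.map_append, List.sum_append]
  have h2 := blocks_take_lt n K q a K (le_refl K)
  have h3 : (blocksL n K q a).take K = ((List.range K).map (fun i' => arcL n K (a i'))) := by
    rw [blocksL, List.take_append_of_le_length (by simp), ← List.map_take,
      List.take_range]
    congr 2
    omega
  rw [h3] at h2
  rw [h2]
  simp

-- window sums
lemma wfn_arc (n K q : ℕ) (a : ℕ → ℕ → ℕ) (i : ℕ) (hi : i < K) :
    ∑ t ∈ Finset.range (rowlen K a i), wfn n K q a (PP K a i + t) = sVal n K (a i) := by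
  have := window_sum (blocksL n K q a) i (by rw [blocks_length]; omega)
  rw [blocks_getD_lt n K q a i hi, blocks_take_lt n K q a i (by omega), arcL_length,
    arcL_sum] at this
  simp only [wfn, wl, sVal, rowlen]
  exact this

lemma wfn_neg (n K q : ℕ) (a : ℕ → ℕ → ℕ) :
    wfn n K q a (PP K a K) = negw n K q := by
  have := window_sum (blocksL n K q a) K (by rw [blocks_length]; omega)
  rw [blocks_getD_K, blocks_take_lt n K q a K (le_refl K)] at this
  simp only [List.length_singleton, Finset.sum_range_one, Nat.add_zero, List.sum_cons,
    List.sum_nil, add_zero] at this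
  simp only [wfn, wl]
  exact this

lemma wfn_corr (n K q : ℕ) (a : ℕ → ℕ → ℕ) :
    ∑ t ∈ Finset.range (lenD K q a), wfn n K q a (PP K a K + 1 + t) = sVal n K (dvec K q a) := by
  have := window_sum (blocksL n K q a) (K+1) (by rw [blocks_length]; omega)
  rw [blocks_getD_K1, blocks_take_K1, arcL_length, arcL_sum] at this
  simp only [wfn, wl, sVal, lenD]
  exact this

-- total length
lemma wl_length (n K q : ℕ) (a : ℕ → ℕ → ℕ) :
    (wl n K q a).length = PP K a K + 1 + lenD K q a := by
  rw [wl, List.length_flatten, blocksL, List.map_append, List.sum_append, List.map_map]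
  have := range_map_sum (fun i' => (arcL n K (a i')).length) K
  rw [show (List.map (List.length ∘ fun i' => arcL n K (a i')) (List.range K))
      = (List.range K).map (fun i' => (arcL n K (a i')).length) from rfl, this]
  simp only [List.map_cons, List.length_cons, List.map_nil, List.sum_cons, List.sum_nil,
    List.length_singleton, List.length_nil, arcL_length]
  simp only [PP, lenD, rowlen]
  have h4 : ∑ x ∈ Finset.range K, (arcL n K (a x)).length
      = ∑ x ∈ Finset.range K, ∑ j ∈ Finset.range K, a x j :=
    Finset.sum_congr rfl (fun x _ => arcL_length n K (a x))
  omega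

-- total sum
lemma wl_sum (n K q : ℕ) (a : ℕ → ℕ → ℕ) :
    (wl n K q a).sum = (∑ i ∈ Finset.range K, sVal n K (a i)) + negw n K q
      + sVal n K (dvec K q a) := by
  rw [wl, List.sum_flatten, blocksL, List.map_append, List.sum_append, List.map_map]
  have := range_map_sum (fun i' => (arcL n K (a i')).sum) K
  rw [show (List.map (List.sum ∘ fun i' => arcL n K (a i')) (List.range K))
      = (List.range K).map (fun i' => (arcL n K (a i')).sum) from rfl, this]
  simp only [List.map_cons, List.sum_cons, List.map_nil, List.sum_nil, arcL_sum]
  simp only [sVal]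
  ring

-- membership
lemma wl_mem (n K q : ℕ) (a : ℕ → ℕ → ℕ) (x : ℤ) (hx : x ∈ wl n K q a) :
    (∃ j < K, x = (n:ℤ)^j) ∨ x = negw n K q := by
  rw [wl, List.mem_flatten] at hx
  obtain ⟨l, hl, hx⟩ := hx
  rw [blocksL] at hl
  rcases List.mem_append.mp hl with h | h
  · rw [List.mem_map] at h
    obtain ⟨i, _, rfl⟩ := h
    exact Or.inl (arcL_mem n K (a i) x hx)
  · simp only [List.mem_cons, List.mem_singleton] at h
    rcases h with rfl | h
    · right
      simpa using hx
    · rcases h with rfl | h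
      · exact Or.inl (arcL_mem n K (dvec K q a) x hx)
      · simp at h

section Constr
variable (n K q : ℕ) (aa : ℕ → ℕ → ℕ)

-- total identity in ℤ
lemma totZ (hcol : ∀ j, j < K → (∑ i ∈ Finset.range K, aa i j) ≤ q) :
    (∑ i ∈ Finset.range K, sVal n K (aa i)) + sVal n K (dvec K q aa)
      = (q:ℤ) * ∑ j ∈ Finset.range K, (n:ℤ)^j := by
  have hswap : (∑ i ∈ Finset.range K, sVal n K (aa i))
      = ∑ j ∈ Finset.range K, ((∑ i ∈ Finset.range K, aa i j : ℕ) : ℤ) * (n:ℤ)^j := by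
    simp only [sVal]
    rw [Finset.sum_comm]
    apply Finset.sum_congr rfl
    intro j _
    push_cast
    rw [Finset.sum_mul]
  rw [hswap, sVal, ← Finset.sum_add_distrib, Finset.mul_sum]
  apply Finset.sum_congr rfl
  intro j hj
  rw [Finset.mem_range] at hj
  have h1 : ((∑ i ∈ Finset.range K, aa i j : ℕ) : ℤ) + ((dvec K q aa j : ℕ) : ℤ) = (q : ℤ) := by
    simp only [dvec]
    rw [Nat.cast_sub (hcol j hj)]
    ring
  rw [← add_mul, h1]

lemma wl_length_n (hqK : q * K = n - 1) (hn : 2 ≤ n)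
    (hcol : ∀ j, j < K → (∑ i ∈ Finset.range K, aa i j) ≤ q) :
    (wl n K q aa).length = n := by
  rw [wl_length]
  have h1 : PP K aa K = ∑ j ∈ Finset.range K, ∑ i ∈ Finset.range K, aa i j := by
    simp only [PP, rowlen]
    exact Finset.sum_comm
  have h2 : ∀ j ∈ Finset.range K, (∑ i ∈ Finset.range K, aa i j) + dvec K q aa j = q := by
    intro j hj
    rw [Finset.mem_range] at hj
    have := hcol j hj
    rw [dvec]
    omega
  have h3 : PP K aa K + lenD K q aa = q * K := by
    rw [h1, lenD, ← Finset.sum_add_distrib, Finset.sum_congr rfl h2, Finset.sum_const,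
      Finset.card_range, smul_eq_mul, mul_comm]
  omega

lemma wfn_sum_zero (hqK : q * K = n - 1) (hn : 2 ≤ n)
    (hcol : ∀ j, j < K → (∑ i ∈ Finset.range K, aa i j) ≤ q) :
    ∑ t ∈ Finset.range n, wfn n K q aa t = 0 := by
  have hlen := wl_length_n n K q aa hqK hn hcol
  have := sum_range_getD' (wl n K q aa)
  rw [hlen] at this
  simp only [wfn]
  rw [this, wl_sum]
  have := totZ n K q aa hcol
  rw [negw]
  linarith

lemma satMP_constr (hqK : q * K = n - 1) (hn : 2 ≤ n)
    (hcol : ∀ j, j < K → (∑ i ∈ Finset.range K, aa i j) ≤ q) :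
    SatMP (cycE n (wfn n K q aa)) :=
  satMP_cyc n hn _ (wfn_sum_zero n K q aa hqK hn hcol)

end Constr

/-- let `k, n ≥ 2` with `k - 1` dividing `n - 1`, let
`T = 1 + n + n² + ⋯ + n^(k-2)` and `W = {1, n, n², …, n^(k-2)} ∪ {-((n-1)/(k-1))·T}`,
a set of `k` integers. Then every `(n,W)`-universal graph `U` satisfies (as real
numbers) `|U|^k ≥ ((n-1)/(k-1)²)^((k-1)²)`; equivalently,
`|U| ≥ ((n-1)/(k-1)²)^((k-1)²/k)`. -/
theorem universal_lower_bound_number_of_weights (k n : ℕ) (hk : 2 ≤ k) (hn : 2 ≤ n)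
    (hdvd : k - 1 ∣ n - 1)
    (T : ℤ) (hT : T = ∑ j ∈ Finset.range (k - 1), (n : ℤ) ^ j)
    (W : Finset ℤ)
    (hW : W = (Finset.range (k - 1)).image (fun j => (n : ℤ) ^ j) ∪
      {-(((n - 1) / (k - 1) : ℕ) : ℤ) * T}) :
    W.card = k ∧
    ∀ (U : Type) (fU : Fintype U) (EU : Set (U × ℤ × U)), Universal n W EU →
      ((((n : ℝ) - 1) / ((k : ℝ) - 1) ^ 2) ^ ((k - 1) ^ 2) ≤
        (@Fintype.card U fU : ℝ) ^ k ∧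
      (((n : ℝ) - 1) / ((k : ℝ) - 1) ^ 2) ^ ((((k - 1) ^ 2 : ℕ) : ℝ) / (k : ℝ)) ≤
        (@Fintype.card U fU : ℝ)) := by
  have hK1 : 1 ≤ k - 1 := by omega
  set K := k - 1 with hKdef
  set q := (n - 1) / (k - 1) with hqdef
  have hqK : q * K = n - 1 := Nat.div_mul_cancel hdvd
  have hq1 : 1 ≤ q := by
    rcases Nat.eq_zero_or_pos q with h | h
    · rw [h, Nat.zero_mul] at hqK; omega
    · exact h
  set s := (q - 1) / K + 1 with hsdef
  have hs1 : 1 ≤ s := Nat.le_add_left 1 _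
  have hKs : K * (s - 1) ≤ q - 1 := by
    have h := Nat.div_mul_le_self (q-1) K
    calc K * (s - 1) = (q-1)/K * K := by rw [hsdef, Nat.add_sub_cancel, Nat.mul_comm]
      _ ≤ q - 1 := h
  have hqsK : q ≤ K * s := by
    have h := Nat.lt_mul_div_succ (q-1) (show 0 < K by omega)
    rw [← hsdef] at h
    omega
  have hsq : s ≤ q := by
    have := Nat.div_le_self (q-1) K
    omega
  have hqn : q ≤ n - 1 := by
    have h : q * 1 ≤ q * K := Nat.mul_le_mul_left q hK1
    omega
  have hTpos : 0 < T := by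
    rw [hT]
    apply Finset.sum_pos
    · intro j _
      positivity
    · exact ⟨0, Finset.mem_range.mpr (by omega)⟩
  constructor
  · -- cardinality of W
    rw [hW]
    have hinj : Function.Injective (fun j : ℕ => (n : ℤ) ^ j) := by
      apply StrictMono.injective
      apply pow_right_strictMono₀
      exact_mod_cast (by omega : 1 < n)
    have hdis : Disjoint ((Finset.range K).image (fun j => (n : ℤ) ^ j))
        ({-((q : ℕ) : ℤ) * T} : Finset ℤ) := by
      rw [Finset.disjoint_singleton_right]
      intro hmem
      rw [Finset.mem_image] at hmem
      obtain ⟨j, _, hj⟩ := hmem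
      have h1 : (0:ℤ) < (n:ℤ)^j := by positivity
      have h2 : -((q : ℕ) : ℤ) * T < 0 := by
        have : (0:ℤ) < ((q : ℕ) : ℤ) := by exact_mod_cast hq1
        nlinarith
      omega
    rw [Finset.card_union_of_disjoint hdis, Finset.card_image_of_injective _ hinj,
      Finset.card_range, Finset.card_singleton]
    omega
  · intro U fU EU hU
    haveI : NeZero n := ⟨by omega⟩
    -- the matrices
    classical
    set toN : (Fin K → Fin K → Fin s) → (ℕ → ℕ → ℕ) := fun a i j =>
      if h : i < K ∧ j < K then (a ⟨i, h.1⟩ ⟨j, h.2⟩ : ℕ) else 0 with htoN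
    have hent : ∀ a i j, toN a i j ≤ s - 1 := by
      intro a i j
      simp only [htoN]
      split
      · have := (a ⟨i, by omega⟩ ⟨j, by omega⟩).isLt
        omega
      · omega
    have hcol : ∀ a j, j < K → (∑ i ∈ Finset.range K, toN a i j) ≤ q - 1 := by
      intro a j _
      calc (∑ i ∈ Finset.range K, toN a i j) ≤ ∑ _i ∈ Finset.range K, (s-1) :=
            Finset.sum_le_sum (fun i _ => hent a i j)
        _ = K * (s-1) := by rw [Finset.sum_const, Finset.card_range, smul_eq_mul]
        _ ≤ q - 1 := hKs
    have hcol' : ∀ a j, j < K → (∑ i ∈ Finset.range K, toN a i j) ≤ q := by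
      intro a j hj
      have := hcol a j hj
      omega
    have hentn : ∀ a i j, toN a i j < n := by
      intro a i j
      have := hent a i j
      omega
    set f : (Fin K → Fin K → Fin s) → ℕ → ℤ := fun a => wfn n K q (toN a) with hf
    have hlen : ∀ a, (wl n K q (toN a)).length = n :=
      fun a => wl_length_n n K q (toN a) hqK hn (fun j hj => hcol' a j hj)
    have hPK : ∀ a, PP K (toN a) K + 1 + lenD K q (toN a) = n := by
      intro a
      have h1 := wl_length n K q (toN a)
      rw [hlen a] at h1
      omega
    have hwt : ∀ a (t : ℕ), t < n → f a t ∈ W := by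
      intro a t ht
      have hlt : t < (wl n K q (toN a)).length := by rw [hlen a]; omega
      have hx : f a t ∈ wl n K q (toN a) := by
        show (wl n K q (toN a)).getD t 0 ∈ _
        rw [List.getD_eq_getElem _ _ hlt]
        exact List.getElem_mem hlt
      rcases wl_mem n K q (toN a) _ hx with ⟨j, hj, hjeq⟩ | h
      · rw [hW]
        apply Finset.mem_union_left
        rw [Finset.mem_image]
        exact ⟨j, Finset.mem_range.mpr hj, hjeq.symm⟩
      · rw [hW]
        apply Finset.mem_union_right
        rw [Finset.mem_singleton, h, negw, hT]
    -- the graphs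
    set G : (Fin K → Fin K → Fin s) → WGraph W := fun a =>
      { V := ZMod n
        fin := inferInstance
        E := cycE n (f a)
        init := 0
        wt := by
          rintro e ⟨v, rfl⟩
          exact hwt a v.val (ZMod.val_lt v)
        reach := by
          intro v
          have hwalk := cwalk_walk n (f a) 0 v.val
          have hv : ((0 + v.val : ℕ) : ZMod n) = v := by
            rw [Nat.zero_add]
            exact ZMod.natCast_rightInverse v
          rw [hv] at hwalk
          rw [show ((0:ℕ) : ZMod n) = (0 : ZMod n) from Nat.cast_zero] at hwalk
          exact ⟨_, hwalk.toFinPath⟩ } with hG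
    have hhom : ∀ a, ∃ φ : ZMod n → U, IsHom (cycE n (f a)) EU φ := by
      intro a
      have hcard : Fintype.card (G a).V ≤ n := by
        show Fintype.card (ZMod n) ≤ n
        rw [ZMod.card]
      have hmp : SatMP (G a).E :=
        satMP_constr n K q (toN a) hqK hn (fun j hj => hcol' a j hj)
      exact hU.2 (G a) hcard hmp
    set φ : (Fin K → Fin K → Fin s) → (ZMod n → U) := fun a => (hhom a).choose with hφdef
    have hφ : ∀ a, IsHom (cycE n (f a)) EU (φ a) := fun a => (hhom a).choose_spec
    -- marked vertices
    set Φ : (Fin K → Fin K → Fin s) → (Fin (K+1) → U) :=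
      fun a i => φ a ((PP K (toN a) i.val : ℕ) : ZMod n) with hΦdef
    -- injectivity
    have hinj : Function.Injective Φ := by
      intro a b hab
      by_contra hne
      set SN : (Fin K → Fin K → Fin s) → ℕ → ℕ :=
        fun x i => ∑ j ∈ Finset.range K, toN x i j * n^j with hSN
      have hSZ : ∀ x i, sVal n K (toN x i) = ((SN x i : ℕ) : ℤ) := by
        intro x i
        rw [sVal, hSN]
        push_cast
        rfl
      set RZ : (Fin K → Fin K → Fin s) → ℤ := fun x => sVal n K (dvec K q (toN x)) with hRZ
      set TZ : ℤ := ∑ j ∈ Finset.range K, (n:ℤ)^j with hTZ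
      have hTot : ∀ x, (∑ i ∈ Finset.range K, ((SN x i : ℕ) : ℤ)) + RZ x = (q:ℤ) * TZ := by
        intro x
        have := totZ n K q (toN x) (fun j hj => hcol' x j hj)
        rw [Finset.sum_congr rfl (fun i _ => (hSZ x i).symm)]
        exact this
      -- a row where a and b differ
      have hrow : ∃ i0 : Fin K, a i0 ≠ b i0 := by
        by_contra h
        push_neg at h
        exact hne (funext h)
      obtain ⟨i0, hi0⟩ := hrow
      have hSNne : SN a i0.val ≠ SN b i0.val := by
        intro hEq
        apply hi0
        funext j
        have hdig := digits_unique n hn K (fun j => toN a i0.val j) (fun j => toN b i0.val j)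
          (fun j _ => hentn a i0.val j) (fun j _ => hentn b i0.val j) hEq j.val j.isLt
        simp only [htoN] at hdig
        rw [dif_pos ⟨i0.isLt, j.isLt⟩, dif_pos ⟨i0.isLt, j.isLt⟩] at hdig
        have : a ⟨i0.val, i0.isLt⟩ ⟨j.val, j.isLt⟩ = b ⟨i0.val, i0.isLt⟩ ⟨j.val, j.isLt⟩ :=
          Fin.val_injective hdig
        simpa using this
      -- choices
      set c : ℕ → (Fin K → Fin K → Fin s) := fun i => if SN a i ≤ SN b i then a else b with hc
      set y : (Fin K → Fin K → Fin s) := if RZ a ≤ RZ b then a else b with hy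
      have hcval : ∀ i, (SN a i ≤ SN b i → c i = a) ∧ (¬ SN a i ≤ SN b i → c i = b) := by
        intro i
        constructor <;> intro h <;> simp [hc, h]
      have hyval : (RZ a ≤ RZ b → y = a) ∧ (¬ RZ a ≤ RZ b → y = b) := by
        constructor <;> intro h <;> simp [hy, h]
      have hcab : ∀ i, c i = a ∨ c i = b := by
        intro i
        by_cases h : SN a i ≤ SN b i
        · exact Or.inl ((hcval i).1 h)
        · exact Or.inr ((hcval i).2 h)
      have hyab : y = a ∨ y = b := by
        by_cases h : RZ a ≤ RZ b
        · exact Or.inl (hyval.1 h)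
        · exact Or.inr (hyval.2 h)
      -- common marked images
      set z : ℕ → U := fun i => Φ a ⟨min i K, by omega⟩ with hz
      have hzx : ∀ x, (x = a ∨ x = b) → ∀ i, i ≤ K →
          φ x ((PP K (toN x) i : ℕ) : ZMod n) = z i := by
        intro x hx i hiK
        have hmin : min i K = i := Nat.min_eq_left hiK
        have h1 : z i = φ a ((PP K (toN a) (min i K) : ℕ) : ZMod n) := rfl
        have h2 : z i = φ b ((PP K (toN b) (min i K) : ℕ) : ZMod n) := by
          show Φ a ⟨min i K, by omega⟩ = _
          rw [hab]
        rcases hx with rfl | rfl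
        · rw [h1, hmin]
        · rw [h2, hmin]
      -- arc pieces
      set arcIm : ℕ → List (U × ℤ × U) := fun i =>
        (cwalk n (f (c i)) (PP K (toN (c i)) i) (rowlen K (toN (c i)) i)).map
          (fun e => (φ (c i) e.1, e.2.1, φ (c i) e.2.2)) with harcIm
      have hPPsucc : ∀ x i, PP K (toN x) i + rowlen K (toN x) i = PP K (toN x) (i+1) := by
        intro x i
        rw [PP, PP, Finset.sum_range_succ]
      have hPPmono : ∀ x i, i ≤ K → PP K (toN x) i ≤ PP K (toN x) K := by
        intro x i hiK
        apply Finset.sum_le_sum_of_subset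
        intro t ht
        rw [Finset.mem_range] at *
        omega
      have hArc : ∀ i, i < K → Walk EU (z i) (arcIm i) (z (i+1))
          ∧ pathWeight (arcIm i) = ((SN (c i) i : ℕ) : ℤ) := by
        intro i hiK
        have hwalk := cwalk_walk n (f (c i)) (PP K (toN (c i)) i) (rowlen K (toN (c i)) i)
        have hw2 := (hwalk.map (hφ (c i)))
        rw [hPPsucc (c i) i] at hw2
        rw [hzx (c i) (hcab i) i (by omega), hzx (c i) (hcab i) (i+1) (by omega)] at hw2
        constructor
        · exact hw2
        · rw [harcIm]
          rw [pathWeight_map]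
          rw [cwalk_weight n (f (c i)) _ _ ?hle]
          · rw [← hSZ (c i) i, sVal]
            have := wfn_arc n K q (toN (c i)) i hiK
            rw [← sVal]
            exact this
          · have h1 := hPPsucc (c i) i
            have h2 := hPPmono (c i) (i+1) (by omega)
            have h3 := hPK (c i)
            omega
      -- flatMap of arcs
      have hFlat : ∀ m, m ≤ K → Walk EU (z 0) ((List.range m).flatMap arcIm) (z m)
          ∧ pathWeight ((List.range m).flatMap arcIm)
            = ∑ i ∈ Finset.range m, ((SN (c i) i : ℕ) : ℤ) := by
        intro m
        induction m with
        | zero =>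
          intro _
          constructor
          · simpa using Walk.nil EU (z 0)
          · simp [pathWeight]
        | succ m ih =>
          intro hm
          have hm' : m ≤ K := by omega
          obtain ⟨ihw, ihweight⟩ := ih hm'
          have hstep := hArc m (by omega)
          have hsplit : (List.range (m+1)).flatMap arcIm
              = (List.range m).flatMap arcIm ++ arcIm m := by
            rw [List.range_succ, List.flatMap_append]
            simp
          constructor
          · rw [hsplit]
            exact ihw.append hstep.1
          · rw [hsplit, pathWeight_append, ihweight, hstep.2, Finset.sum_range_succ]
      -- last arc
      set larc : List (U × ℤ × U) :=
        (cwalk n (f y) (PP K (toN y) K) (1 + lenD K q (toN y))).map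
          (fun e => (φ y e.1, e.2.1, φ y e.2.2)) with hlarc
      have hlast : Walk EU (z K) larc (z 0) := by
        have hwalk := cwalk_walk n (f y) (PP K (toN y) K) (1 + lenD K q (toN y))
        have hw2 := hwalk.map (hφ y)
        rw [hzx y hyab K (le_refl K)] at hw2
        have hend : ((PP K (toN y) K + (1 + lenD K q (toN y)) : ℕ) : ZMod n) = ((0:ℕ) : ZMod n) := by
          rw [show PP K (toN y) K + (1 + lenD K q (toN y)) = n by have := hPK y; omega]
          simp [ZMod.natCast_self]
        rw [hend] at hw2
        have hz0 : φ y ((0 : ℕ) : ZMod n) = z 0 := by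
          have := hzx y hyab 0 (by omega)
          rw [show PP K (toN y) 0 = 0 from rfl] at this
          exact this
        rw [hz0] at hw2
        exact hw2
      have hlastW : pathWeight larc = negw n K q + RZ y := by
        rw [hlarc, pathWeight_map]
        rw [cwalk_weight n (f y) _ _ (by have := hPK y; omega)]
        rw [show 1 + lenD K q (toN y) = lenD K q (toN y) + 1 by omega]
        rw [Finset.sum_range_succ']
        have h2 : ∀ t ∈ Finset.range (lenD K q (toN y)),
            f y (PP K (toN y) K + (t+1)) = wfn n K q (toN y) (PP K (toN y) K + 1 + t) := by
          intro t _
          show wfn n K q (toN y) _ = wfn n K q (toN y) _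
          congr 1
          omega
        rw [Finset.sum_congr rfl h2, wfn_corr]
        rw [Nat.add_zero]
        rw [show f y (PP K (toN y) K) = wfn n K q (toN y) (PP K (toN y) K) from rfl, wfn_neg]
        rw [hRZ]
        ring
      have hlarcne : larc ≠ [] := by
        apply List.ne_nil_of_length_pos
        rw [hlarc, List.length_map, cwalk, List.length_ofFn]
        omega
      -- the spliced cycle
      set spl : List (U × ℤ × U) := (List.range K).flatMap arcIm ++ larc with hspl
      have hsplwalk : Walk EU (z 0) spl (z 0) := by
        have h1 := (hFlat K (le_refl K)).1
        exact h1.append hlast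
      have hsplne : spl ≠ [] := by
        apply List.ne_nil_of_length_pos
        rw [hspl, List.length_append]
        have : 0 < larc.length := List.length_pos_iff.mpr hlarcne
        omega
      have hsplweight : pathWeight spl
          = (∑ i ∈ Finset.range K, ((SN (c i) i : ℕ) : ℤ)) + (negw n K q + RZ y) := by
        rw [hspl, pathWeight_append, (hFlat K (le_refl K)).2, hlastW]
      -- strict negativity
      have hminle : ∀ x, (x = a ∨ x = b) →
          (∀ i, i < K → SN (c i) i ≤ SN x i) → RZ y ≤ RZ x →
          SN (c i0.val) i0.val < SN x i0.val →
          pathWeight spl < 0 := by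
        intro x hx hile hRle hstrict
        rw [hsplweight]
        have h1 : (∑ i ∈ Finset.range K, ((SN (c i) i : ℕ) : ℤ))
            < ∑ i ∈ Finset.range K, ((SN x i : ℕ) : ℤ) := by
          apply Finset.sum_lt_sum
          · intro i hi
            rw [Finset.mem_range] at hi
            exact_mod_cast hile i hi
          · exact ⟨i0.val, Finset.mem_range.mpr i0.isLt, by exact_mod_cast hstrict⟩
        have h2 := hTot x
        rw [show negw n K q = -(q:ℤ) * TZ from rfl]
        linarith
      have hneg : pathWeight spl < 0 := by
        rcases Nat.lt_or_ge (SN a i0.val) (SN b i0.val) with hlt | hge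
        · apply hminle b (Or.inr rfl)
          · intro i _
            by_cases h : SN a i ≤ SN b i
            · rw [(hcval i).1 h]; exact h
            · rw [(hcval i).2 h]
          · by_cases h : RZ a ≤ RZ b
            · rw [hyval.1 h]; exact h
            · rw [hyval.2 h]
          · rw [(hcval i0.val).1 (le_of_lt hlt)]
            exact hlt
        · have hgt : SN b i0.val < SN a i0.val := by omega
          apply hminle a (Or.inl rfl)
          · intro i _
            by_cases h : SN a i ≤ SN b i
            · rw [(hcval i).1 h]
            · rw [(hcval i).2 h]; omega
          · by_cases h : RZ a ≤ RZ b
            · rw [hyval.1 h]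
            · rw [hyval.2 h]; omega
          · rw [(hcval i0.val).2 (by omega)]
            exact hgt
      exact not_satMP_of_neg_cycle EU spl hsplne (z 0) hsplwalk hneg hU.1
    -- counting
    have hcardN : s ^ (K*K) ≤ (Fintype.card U) ^ k := by
      have h1 := Fintype.card_le_of_injective Φ hinj
      rw [Fintype.card_fun, Fintype.card_fun, Fintype.card_fun, Fintype.card_fin,
        Fintype.card_fin, Fintype.card_fin] at h1
      calc s ^ (K*K) = (s ^ K) ^ K := by rw [pow_mul]
        _ ≤ (Fintype.card U) ^ (K+1) := h1
        _ = (Fintype.card U) ^ k := by congr 1; omega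
    -- real arithmetic
    have hKR : ((k : ℝ) - 1) = ((K : ℕ) : ℝ) := by
      rw [hKdef]
      push_cast [Nat.cast_sub (by omega : 1 ≤ k)]
      ring
    have hnR : ((n : ℝ) - 1) = (((q * K : ℕ)) : ℝ) := by
      rw [hqK]
      push_cast [Nat.cast_sub (by omega : 1 ≤ n)]
      ring
    have hK0R : (0:ℝ) < (K : ℝ) := by exact_mod_cast (by omega : 0 < K)
    set B : ℝ := ((n : ℝ) - 1) / ((k : ℝ) - 1) ^ 2 with hB
    have hBval : B = (q : ℝ) / (K : ℝ) := by
      rw [hB, hKR, hnR]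
      push_cast
      field_simp
    have hB0 : 0 ≤ B := by
      rw [hBval]
      positivity
    have hBle : B ≤ (s : ℝ) := by
      rw [hBval, div_le_iff₀ hK0R]
      calc (q:ℝ) ≤ ((K * s : ℕ) : ℝ) := by exact_mod_cast hqsK
        _ = (s:ℝ) * (K:ℝ) := by push_cast; ring
    have hexp : (k-1)^2 = K*K := by rw [hKdef]; ring
    have goal1 : B ^ ((k-1)^2) ≤ ((Fintype.card U : ℕ) : ℝ) ^ k := by
      rw [hexp]
      calc B ^ (K*K) ≤ (s:ℝ) ^ (K*K) := pow_le_pow_left₀ hB0 hBle _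
        _ = ((s ^ (K*K) : ℕ) : ℝ) := by push_cast; ring
        _ ≤ (((Fintype.card U) ^ k : ℕ) : ℝ) := by exact_mod_cast hcardN
        _ = ((Fintype.card U : ℕ) : ℝ) ^ k := by push_cast; ring
    refine ⟨goal1, ?_⟩
    have hk0 : (k : ℝ) ≠ 0 := by positivity
    have hX0 : (0:ℝ) ≤ ((Fintype.card U : ℕ) : ℝ) := by positivity
    have h2 := Real.rpow_le_rpow (by positivity) goal1 (by positivity : (0:ℝ) ≤ 1/(k:ℝ))
    rw [← Real.rpow_natCast B ((k-1)^2), ← Real.rpow_mul hB0] at h2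
    rw [← Real.rpow_natCast ((Fintype.card U : ℕ) : ℝ) k, ← Real.rpow_mul hX0] at h2
    rw [mul_one_div, mul_one_div, div_self hk0, Real.rpow_one] at h2
    exact h2
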